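/- arXiv:2001.10279 — 3 statements merged into one kernel-verified Lean document; each statement's English description precedes it below -/
import Mathlib

section
/- For every r > 0 and every φ ∈ ℝ, writing y = (r cos φ, r sin φ) ∈ ℝ², one has the change-of-variables identity B₀(y) = ∫_{π+θ̃_c}^{2π−θ̃_c} f(s) · exp( i k₋ r cos(φ − s) ) ds. -/
open Real MeasureTheory intervalIntegral

/-- The critical angle `θ_c`: `arccos (k₋/k₊)` if `k₊ > k₋`, and `0` if `k₊ < k₋`. -/
noncomputable def thetac (kp km : ℝ) : ℝ := if km < kp then Real.arccos (km / kp) else 0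

/-- The angle `θ̃_c`: `arccos (k₊/k₋)` if `k₋ > k₊`, and `0` if `k₋ < k₊`. -/
noncomputable def thetactilde (kp km : ℝ) : ℝ := if kp < km then Real.arccos (kp / km) else 0

/-- The transmitted angle `θᵗ(θ) = 2π - arccos((k₊/k₋) cos θ) ∈ [π, 2π]`. -/
noncomputable def thetat (kp km θ : ℝ) : ℝ := 2 * Real.pi - Real.arccos (kp / km * Real.cos θ)

/-- The transmission coefficient `T(θ) = 2k₊ sin θ / (k₊ sin θ + k₋ sin θᵗ(θ))`. -/
noncomputable def Tcoef (kp km θ : ℝ) : ℝ :=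
  2 * kp * Real.sin θ / (kp * Real.sin θ + km * Real.sin (thetat kp km θ))

/-- `B₀(y) = ∫_{π+θ_c}^{2π-θ_c} T(θ)² exp(i k₋ y · dᵗ(θ)) dθ`, where
`dᵗ(θ) = (cos θᵗ(θ), sin θᵗ(θ))`. -/
noncomputable def B0 (kp km : ℝ) (y : ℝ × ℝ) : ℂ :=
  ∫ θ in (Real.pi + thetac kp km)..(2 * Real.pi - thetac kp km),
    ((Tcoef kp km θ : ℂ)) ^ 2 *
      Complex.exp (Complex.I * km *
        (y.1 * Real.cos (thetat kp km θ) + y.2 * Real.sin (thetat kp km θ)))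

/-- The density `f(s)` arising from the change of variables `θ ↦ θᵗ` in `B₀`. -/
noncomputable def fdens (kp km s : ℝ) : ℝ :=
  -4 * km * Real.sin s * Real.sqrt (kp ^ 2 - km ^ 2 * (Real.cos s) ^ 2) /
    (-Real.sqrt (kp ^ 2 - km ^ 2 * (Real.cos s) ^ 2) + km * Real.sin s) ^ 2

section Helpers
open Set

lemma arccos_le_arccos' {x y : ℝ} (h : x ≤ y) : Real.arccos y ≤ Real.arccos x := by
  unfold Real.arccos
  have := Real.monotone_arcsin h
  linarith

noncomputable def Gsub (c x : ℝ) : ℝ := 2 * Real.pi - Real.arccos (c * Real.cos x)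

lemma Gsub_arg_mem {c : ℝ} (hc0 : 0 ≤ c) (hc1 : c < 1) (x : ℝ) :
    -1 < c * Real.cos x ∧ c * Real.cos x < 1 := by
  have h1 := Real.neg_one_le_cos x
  have h2 := Real.cos_le_one x
  constructor <;> nlinarith

lemma hasDerivAt_Gsub {c : ℝ} (hc0 : 0 ≤ c) (hc1 : c < 1) (x : ℝ) :
    HasDerivAt (Gsub c) (-(c * Real.sin x) / Real.sqrt (1 - (c * Real.cos x) ^ 2)) x := by
  obtain ⟨h1, h2⟩ := Gsub_arg_mem hc0 hc1 x
  have hu : HasDerivAt (fun x => c * Real.cos x) (c * (-Real.sin x)) x :=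
    (Real.hasDerivAt_cos x).const_mul c
  have h := (Real.hasDerivAt_arccos (ne_of_gt h1) (ne_of_lt h2)).comp x hu
  have h' := h.const_sub (2 * Real.pi)
  exact h'.congr_deriv (by ring)

lemma cos_Gsub {c : ℝ} (hc0 : 0 ≤ c) (hc1 : c < 1) (x : ℝ) :
    Real.cos (Gsub c x) = c * Real.cos x := by
  obtain ⟨h1, h2⟩ := Gsub_arg_mem hc0 hc1 x
  unfold Gsub
  rw [Real.cos_sub]
  simp [Real.cos_two_pi, Real.sin_two_pi, Real.cos_arccos h1.le h2.le]

lemma sin_Gsub (c x : ℝ) :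
    Real.sin (Gsub c x) = -Real.sqrt (1 - (c * Real.cos x) ^ 2) := by
  unfold Gsub
  rw [Real.sin_sub]
  simp [Real.cos_two_pi, Real.sin_two_pi, Real.sin_arccos]

lemma Gsub_pi {c : ℝ} : Gsub c Real.pi = Real.pi + Real.arccos c := by
  unfold Gsub
  rw [Real.cos_pi, mul_neg_one]
  rw [show -c = -c from rfl, Real.arccos_neg]
  linarith

lemma Gsub_two_pi {c : ℝ} : Gsub c (2 * Real.pi) = 2 * Real.pi - Real.arccos c := by
  unfold Gsub
  rw [Real.cos_two_pi, mul_one]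

lemma Gsub_mem {c : ℝ} (hc0 : 0 ≤ c) (x : ℝ) :
    Gsub c x ∈ Icc (Real.pi + Real.arccos c) (2 * Real.pi - Real.arccos c) := by
  have h1 := Real.neg_one_le_cos x
  have h2 := Real.cos_le_one x
  have ha : Real.arccos (c * Real.cos x) ≤ Real.arccos (-c) := by
    apply arccos_le_arccos'; nlinarith
  have hb : Real.arccos c ≤ Real.arccos (c * Real.cos x) := by
    apply arccos_le_arccos'; nlinarith
  rw [Real.arccos_neg] at ha
  unfold Gsub
  constructor <;> linarith

lemma sin_nonpos_of_mem {x : ℝ} (hx : x ∈ Icc Real.pi (2 * Real.pi)) : Real.sin x ≤ 0 := by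
  have : Real.sin x = -Real.sin (x - Real.pi) := by
    rw [Real.sin_sub, Real.sin_pi, Real.cos_pi]; ring
  rw [this, neg_nonpos]
  exact Real.sin_nonneg_of_nonneg_of_le_pi (by linarith [hx.1]) (by linarith [hx.2])


end Helpers
open Set


set_option maxHeartbeats 1000000

/-- The change-of-variables identity (formula (2.10) in the paper): writing
`y = (r cos φ, r sin φ)` with `r > 0`, one has
`B₀(y) = ∫_{π+θ̃_c}^{2π-θ̃_c} f(s) exp(i k₋ r cos(φ - s)) ds`. -/
theorem B0_change_of_variables (kp km : ℝ) (hkp : 0 < kp) (hkm : 0 < km) (hne : kp ≠ km)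
    (r : ℝ) (hr : 0 < r) (φ : ℝ) :
    B0 kp km (r * Real.cos φ, r * Real.sin φ) =
      ∫ s in (Real.pi + thetactilde kp km)..(2 * Real.pi - thetactilde kp km),
        ((fdens kp km s : ℂ)) * Complex.exp (Complex.I * km * r * Real.cos (φ - s)) := by
  have hpi := Real.pi_pos
  rcases lt_or_gt_of_ne hne with hlt | hgt
  · -- kp < km
    set c := kp / km with hc_def
    have hc0 : (0:ℝ) ≤ c := by positivity
    have hc1 : c < 1 := (div_lt_one hkm).2 hlt
    have hGth : thetat kp km = Gsub c := rfl
    have htc : thetac kp km = 0 := if_neg (not_lt.2 hlt.le)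
    have httc : thetactilde kp km = Real.arccos c := if_pos hlt
    have hacpos : 0 < Real.arccos c := Real.arccos_pos.2 hc1
    have hq_pos : ∀ θ : ℝ, 0 < Real.sqrt (1 - (c * Real.cos θ)^2) := by
      intro θ
      obtain ⟨h1, h2⟩ := Gsub_arg_mem hc0 hc1 θ
      apply Real.sqrt_pos.2; nlinarith
    set E : ℝ → ℂ := fun s => ((fdens kp km s : ℂ)) *
      Complex.exp (Complex.I * km * r * Real.cos (φ - s)) with hE_def
    have step1 : B0 kp km (r * Real.cos φ, r * Real.sin φ) =
        ∫ θ in Real.pi..(2*Real.pi),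
          (-(c * Real.sin θ) / Real.sqrt (1 - (c * Real.cos θ)^2)) • (E ∘ Gsub c) θ := by
      rw [B0, htc, add_zero, sub_zero]
      apply intervalIntegral.integral_congr
      intro θ hθ
      rw [Set.uIcc_of_le (by linarith)] at hθ
      have hsin : Real.sin θ ≤ 0 := sin_nonpos_of_mem hθ
      set q := Real.sqrt (1 - (c * Real.cos θ)^2) with hq
      have hq0 : 0 < q := hq_pos θ
      have hcosG : Real.cos (Gsub c θ) = c * Real.cos θ := cos_Gsub hc0 hc1 θ
      have hsinG : Real.sin (Gsub c θ) = -q := sin_Gsub c θ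
      have hQ : kp^2 - km^2 * (Real.cos (Gsub c θ))^2 = (-(kp * Real.sin θ))^2 := by
        rw [hcosG]
        have hs := Real.sin_sq_add_cos_sq θ
        field_simp [hc_def]
        rw [hc_def]
        field_simp
        nlinarith
      have hsqrt : Real.sqrt (kp^2 - km^2 * (Real.cos (Gsub c θ))^2) = -(kp * Real.sin θ) := by
        rw [hQ, Real.sqrt_sq (by nlinarith)]
      have hfd : fdens kp km (Gsub c θ) =
          -4*km*(-q)*(-(kp*Real.sin θ)) / (-(-(kp*Real.sin θ)) + km*(-q))^2 := by
        unfold fdens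
        rw [hsqrt, hsinG]
      have hT : Tcoef kp km θ = 2*kp*Real.sin θ / (kp*Real.sin θ + km*(-q)) := by
        unfold Tcoef
        rw [hGth, hsinG]
      have hD : kp*Real.sin θ + km*(-q) < 0 := by nlinarith
      have key : (Tcoef kp km θ)^2 = (-(c*Real.sin θ)/q) * fdens kp km (Gsub c θ) := by
        have h1 : kp*Real.sin θ + km*(-q) ≠ 0 := ne_of_lt hD
        rw [hT, hfd, hc_def,
          show (- -(kp*Real.sin θ) + km*(-q)) = kp*Real.sin θ + km*(-q) by ring,
          div_pow, div_mul_div_comm,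
          div_eq_div_iff (pow_ne_zero 2 h1) (mul_ne_zero hq0.ne' (pow_ne_zero 2 h1))]
        field_simp
        ring
      simp only [Function.comp, hE_def, Complex.real_smul]
      rw [hGth]
      have hcs : Real.cos (φ - Gsub c θ) =
          Real.cos φ * Real.cos (Gsub c θ) + Real.sin φ * Real.sin (Gsub c θ) := Real.cos_sub φ _
      rw [hcs]
      have hexp : Complex.I * (km:ℂ) *
            ((((r * Real.cos φ, r * Real.sin φ).1 : ℝ) : ℂ) * (Real.cos (Gsub c θ) : ℂ) +
             (((r * Real.cos φ, r * Real.sin φ).2 : ℝ) : ℂ) * (Real.sin (Gsub c θ) : ℂ)) =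
          Complex.I * (km:ℂ) * (r:ℂ) *
            ((Real.cos φ * Real.cos (Gsub c θ) + Real.sin φ * Real.sin (Gsub c θ) : ℝ) : ℂ) := by
        push_cast
        ring
      rw [hexp, ← mul_assoc]
      congr 1
      exact_mod_cast key
    have step2 : (∫ θ in Real.pi..(2*Real.pi),
          (-(c * Real.sin θ) / Real.sqrt (1 - (c * Real.cos θ)^2)) • (E ∘ Gsub c) θ) =
        ∫ s in (Gsub c Real.pi)..(Gsub c (2*Real.pi)), E s := by
      apply intervalIntegral.integral_comp_smul_deriv'
      · exact fun x _ => hasDerivAt_Gsub hc0 hc1 x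
      · apply ContinuousOn.div
        · fun_prop
        · fun_prop
        · exact fun x _ => (hq_pos x).ne'
      · apply ContinuousOn.mono (s := Icc (Real.pi + Real.arccos c) (2*Real.pi - Real.arccos c))
        swap
        · rintro s ⟨x, _, rfl⟩
          exact Gsub_mem hc0 x
        have hsinneg : ∀ s ∈ Icc (Real.pi + Real.arccos c) (2*Real.pi - Real.arccos c),
            Real.sin s < 0 := by
          intro s hs
          have h1 : Real.pi < s := by linarith [hs.1]
          have h2 : s < 2*Real.pi := by linarith [hs.2]
          have hx : Real.sin s = -Real.sin (s - Real.pi) := by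
            rw [Real.sin_sub, Real.sin_pi, Real.cos_pi]; ring
          have hpos : 0 < Real.sin (s - Real.pi) :=
            Real.sin_pos_of_pos_of_lt_pi (by linarith) (by linarith)
          rw [hx]; linarith
        apply ContinuousOn.mul
        · apply Continuous.comp_continuousOn Complex.continuous_ofReal
          unfold fdens
          apply ContinuousOn.div
          · fun_prop
          · fun_prop
          · intro s hs
            have h1 := hsinneg s hs
            have h2 : 0 ≤ Real.sqrt (kp^2 - km^2*(Real.cos s)^2) := Real.sqrt_nonneg _
            apply pow_ne_zero
            nlinarith
        · fun_prop
    rw [step1, step2, Gsub_pi, Gsub_two_pi, httc]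
  · -- km < kp
    set c := km / kp with hc_def
    have hc0 : (0:ℝ) ≤ c := by positivity
    have hc1 : c < 1 := (div_lt_one hkp).2 hgt
    have htc : thetac kp km = Real.arccos c := if_pos hgt
    have httc : thetactilde kp km = 0 := if_neg (not_lt.2 hgt.le)
    have hacpos : 0 < Real.arccos c := Real.arccos_pos.2 hc1
    have hGth2 : thetat kp km = Gsub (kp/km) := rfl
    have hq_pos : ∀ s : ℝ, 0 < Real.sqrt (1 - (c * Real.cos s)^2) := by
      intro s
      obtain ⟨h1, h2⟩ := Gsub_arg_mem hc0 hc1 s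
      apply Real.sqrt_pos.2; nlinarith
    have hsinneg : ∀ s ∈ Icc (Real.pi + Real.arccos c) (2*Real.pi - Real.arccos c),
        Real.sin s < 0 := by
      intro s hs
      have hle := Real.arccos_le_pi c
      have h1 : Real.pi < s := by linarith [hs.1]
      have h2 : s < 2*Real.pi := by linarith [hs.2]
      have hx : Real.sin s = -Real.sin (s - Real.pi) := by
        rw [Real.sin_sub, Real.sin_pi, Real.cos_pi]; ring
      have hpos : 0 < Real.sin (s - Real.pi) :=
        Real.sin_pos_of_pos_of_lt_pi (by linarith) (by linarith)
      rw [hx]; linarith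
    have key : Set.EqOn
        (fun s => ((fdens kp km s : ℂ)) * Complex.exp (Complex.I * km * r * Real.cos (φ - s)))
        (fun s => (-(c * Real.sin s) / Real.sqrt (1 - (c * Real.cos s)^2)) •
          ((fun θ => ((Tcoef kp km θ : ℂ)) ^ 2 *
            Complex.exp (Complex.I * km *
              ((r * Real.cos φ, r * Real.sin φ).1 * Real.cos (thetat kp km θ) +
               (r * Real.cos φ, r * Real.sin φ).2 * Real.sin (thetat kp km θ)))) ∘ Gsub c) s)
        (Set.uIcc Real.pi (2*Real.pi)) := by
      intro s hs
      rw [Set.uIcc_of_le (by linarith)] at hs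
      have hsin : Real.sin s ≤ 0 := sin_nonpos_of_mem hs
      set q := Real.sqrt (1 - (c * Real.cos s)^2) with hq
      have hq0 : 0 < q := hq_pos s
      have hq2 : q^2 = 1 - (c * Real.cos s)^2 := by
        rw [hq]
        apply Real.sq_sqrt
        obtain ⟨h1, h2⟩ := Gsub_arg_mem hc0 hc1 s
        nlinarith
      have hsinG : Real.sin (Gsub c s) = -q := sin_Gsub c s
      have ht : thetat kp km (Gsub c s) = s := by
        unfold thetat
        rw [cos_Gsub hc0 hc1 s, hc_def,
          show kp/km*(km/kp*Real.cos s) = Real.cos s by field_simp,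
          show Real.cos s = Real.cos (2*Real.pi - s) by rw [Real.cos_sub]; simp,
          Real.arccos_cos (by linarith [hs.2]) (by linarith [hs.1])]
        ring
      have hT : Tcoef kp km (Gsub c s) = 2*kp*(-q) / (kp*(-q) + km*Real.sin s) := by
        unfold Tcoef
        rw [ht, hsinG]
      have hQ : kp^2 - km^2*(Real.cos s)^2 = (kp*q)^2 := by
        rw [mul_pow, hq2, hc_def]
        field_simp
      have hsqrtQ : Real.sqrt (kp^2 - km^2*(Real.cos s)^2) = kp*q := by
        rw [hQ, Real.sqrt_sq (by positivity)]
      have hfd : fdens kp km s =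
          -4*km*Real.sin s*(kp*q) / (-(kp*q) + km*Real.sin s)^2 := by
        unfold fdens
        rw [hsqrtQ]
      have hD : -(kp*q) + km*Real.sin s < 0 := by
        have h1 : 0 < kp*q := mul_pos hkp hq0
        nlinarith
      have keyr : fdens kp km s =
          (-(c*Real.sin s)/q) * (Tcoef kp km (Gsub c s))^2 := by
        rw [hfd, hT, hc_def,
          show kp*(-q) + km*Real.sin s = -(kp*q) + km*Real.sin s by ring,
          div_pow, div_mul_div_comm,
          div_eq_div_iff (pow_ne_zero 2 hD.ne) (mul_ne_zero hq0.ne' (pow_ne_zero 2 hD.ne))]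
        field_simp
        ring
      simp only [Function.comp, Complex.real_smul]
      rw [ht, Real.cos_sub]
      have hexp : Complex.I * (km:ℂ) * (r:ℂ) *
            ((Real.cos φ * Real.cos s + Real.sin φ * Real.sin s : ℝ) : ℂ) =
          Complex.I * (km:ℂ) *
            ((((r * Real.cos φ, r * Real.sin φ).1 : ℝ) : ℂ) * (Real.cos s : ℂ) +
             (((r * Real.cos φ, r * Real.sin φ).2 : ℝ) : ℂ) * (Real.sin s : ℂ)) := by
        push_cast
        ring
      rw [hexp, keyr, hc_def]
      push_cast
      ring
    rw [B0, htc, httc, add_zero, sub_zero]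
    rw [intervalIntegral.integral_congr key]
    rw [intervalIntegral.integral_comp_smul_deriv'
      (fun x _ => hasDerivAt_Gsub hc0 hc1 x)
      (ContinuousOn.div (by fun_prop) (by fun_prop) (fun x _ => (hq_pos x).ne'))
      ?hcont]
    · rw [Gsub_pi, Gsub_two_pi]
    case hcont =>
      apply ContinuousOn.mono (s := Icc (Real.pi + Real.arccos c) (2*Real.pi - Real.arccos c))
      swap
      · rintro θ ⟨x, _, rfl⟩
        exact Gsub_mem hc0 x
      apply ContinuousOn.mul
      · apply ContinuousOn.pow
        apply Continuous.comp_continuousOn Complex.continuous_ofReal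
        unfold Tcoef
        apply ContinuousOn.div
        · fun_prop
        · unfold thetat
          apply Continuous.continuousOn
          exact (continuous_const.mul Real.continuous_sin).add
            (continuous_const.mul (Real.continuous_sin.comp
              (continuous_const.sub (Real.continuous_arccos.comp
                (continuous_const.mul Real.continuous_cos)))))
        · intro θ hθ
          have h1 : Real.sin θ < 0 := hsinneg θ hθ
          have h2 : Real.sin (thetat kp km θ) ≤ 0 := by
            rw [hGth2, sin_Gsub]
            simp [Real.sqrt_nonneg]
          nlinarith
      · unfold thetat
        apply Continuous.continuousOn
        have c1 : Continuous fun θ : ℝ => 2*Real.pi - Real.arccos (kp/km*Real.cos θ) :=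
          continuous_const.sub (Real.continuous_arccos.comp
            (continuous_const.mul Real.continuous_cos))
        apply Complex.continuous_exp.comp
        apply Continuous.mul continuous_const
        exact (continuous_const.mul (Complex.continuous_ofReal.comp
            (Real.continuous_cos.comp c1))).add
          (continuous_const.mul (Complex.continuous_ofReal.comp
            (Real.continuous_sin.comp c1)))
end

section
/- Let a < b be real numbers with b − a ≤ 2π and let g : [a,b] → ℂ be continuously differentiable. Then there exists a constant C > 0 (depending only on g, a and b) such that for every φ ∈ ℝ and every λ ≥ 1, one has |∫_a^b g(s) · exp( i λ cos(φ − s) ) ds| ≤ C λ^{−1/2}. -/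
open Real MeasureTheory intervalIntegral

lemma hasDerivAt_phaseExp (lam u : ℝ) :
    HasDerivAt (fun v : ℝ => Complex.exp (Complex.I * lam * Real.cos v))
      (Complex.exp (Complex.I * lam * Real.cos u) * (Complex.I * lam * (-Real.sin u))) u := by
  have h1 : HasDerivAt (fun v : ℝ => ((Real.cos v : ℝ) : ℂ)) ((-Real.sin u : ℝ) : ℂ) u :=
    (Real.hasDerivAt_cos u).ofReal_comp
  have h2 : HasDerivAt (fun v : ℝ => Complex.I * lam * (Real.cos v : ℂ))
      (Complex.I * lam * ((-Real.sin u : ℝ) : ℂ)) u := h1.const_mul _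
  have := h2.cexp
  simpa [mul_comm] using this

lemma norm_phaseExp (lam u : ℝ) :
    ‖Complex.exp (Complex.I * lam * Real.cos u)‖ = 1 := by
  rw [Complex.norm_exp]
  simp [Complex.mul_re, Complex.mul_im]

lemma core_bound (G G' : ℝ → ℂ) (α β lam m A B : ℝ)
    (hαβ : α ≤ β) (hlam : 1 ≤ lam) (hm : 0 < m)
    (hsin : ∀ u ∈ Set.Icc α β, m ≤ |Real.sin u|)
    (hcos : (∀ u ∈ Set.Icc α β, 0 ≤ Real.cos u) ∨ (∀ u ∈ Set.Icc α β, Real.cos u ≤ 0))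
    (hG : ∀ u ∈ Set.Icc α β, HasDerivAt G (G' u) u)
    (hG' : ContinuousOn G' (Set.Icc α β))
    (hA : ∀ u ∈ Set.Icc α β, ‖G u‖ ≤ A)
    (hB : ∀ u ∈ Set.Icc α β, ‖G' u‖ ≤ B) :
    ‖∫ u in α..β, G u * Complex.exp (Complex.I * lam * Real.cos u)‖
      ≤ (4 * A + B * (β - α)) / (lam * m) := by
  have hlam0 : (0:ℝ) < lam := lt_of_lt_of_le one_pos hlam
  have huIcc : Set.uIcc α β = Set.Icc α β := Set.uIcc_of_le hαβ
  have hsne : ∀ u ∈ Set.Icc α β, Real.sin u ≠ 0 := by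
    intro u hu
    have := hsin u hu
    intro h; rw [h] at this; simp at this; linarith
  set F : ℝ → ℂ := fun u => Complex.exp (Complex.I * lam * Real.cos u) with hF
  set h : ℝ → ℂ := fun u => Complex.I * G u / ((lam : ℂ) * (Real.sin u : ℂ)) with hh
  set h' : ℝ → ℂ := fun u => Complex.I * G' u / ((lam : ℂ) * (Real.sin u : ℂ))
      - Complex.I * G u * (Real.cos u : ℂ) / ((lam : ℂ) * (Real.sin u : ℂ) ^ 2) with hh'
  have hGc : ContinuousOn G (Set.Icc α β) := fun u hu =>
    (hG u hu).continuousAt.continuousWithinAt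
  -- derivative of h * F
  have hder : ∀ u ∈ Set.Icc α β,
      HasDerivAt (fun v => h v * F v) (h' u * F u + G u * F u) u := by
    intro u hu
    have hsu : (Real.sin u : ℂ) ≠ 0 := by
      exact_mod_cast Complex.ofReal_ne_zero.mpr (hsne u hu)
    have hlc : (lam : ℂ) ≠ 0 := by exact_mod_cast ne_of_gt hlam0
    have hDne : (lam : ℂ) * (Real.sin u : ℂ) ≠ 0 := mul_ne_zero hlc hsu
    have hN : HasDerivAt (fun v => Complex.I * G v) (Complex.I * G' u) u :=
      (hG u hu).const_mul _
    have hsin' : HasDerivAt (fun v : ℝ => ((Real.sin v : ℝ) : ℂ)) ((Real.cos u : ℝ) : ℂ) u :=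
      (Real.hasDerivAt_sin u).ofReal_comp
    have hD : HasDerivAt (fun v : ℝ => (lam : ℂ) * (Real.sin v : ℂ))
        ((lam : ℂ) * (Real.cos u : ℂ)) u := hsin'.const_mul _
    have hhd : HasDerivAt h
        ((Complex.I * G' u * ((lam : ℂ) * (Real.sin u : ℂ))
          - Complex.I * G u * ((lam : ℂ) * (Real.cos u : ℂ)))
          / ((lam : ℂ) * (Real.sin u : ℂ)) ^ 2) u := hN.div hD hDne
    have hsu2 : Complex.sin (u:ℂ) ≠ 0 := by rw [← Complex.ofReal_sin]; exact hsu
    have heq : (Complex.I * G' u * ((lam : ℂ) * (Real.sin u : ℂ))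
          - Complex.I * G u * ((lam : ℂ) * (Real.cos u : ℂ)))
          / ((lam : ℂ) * (Real.sin u : ℂ)) ^ 2 = h' u := by
      rw [hh']
      field_simp [hsu2, hlc]
    rw [heq] at hhd
    have := hhd.mul (hasDerivAt_phaseExp lam u)
    have heq2 : h u * (F u * (Complex.I * lam * (-Real.sin u))) = G u * F u := by
      rw [hh, hF]
      have hsu2 : Complex.sin (u:ℂ) ≠ 0 := by rw [← Complex.ofReal_sin]; exact hsu
      field_simp [hsu2, hlc]
      ring_nf
      simp [Complex.I_sq]
    rw [heq2] at this
    exact this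
  -- continuity facts
  have hFc : Continuous F := by
    apply Complex.continuous_exp.comp
    exact (continuous_const.mul ((Complex.continuous_ofReal.comp Real.continuous_cos)))
  have hDne : ∀ u ∈ Set.Icc α β, ((lam : ℂ) * (Real.sin u : ℂ)) ≠ 0 := by
    intro u hu
    exact mul_ne_zero (by exact_mod_cast ne_of_gt hlam0)
      (Complex.ofReal_ne_zero.mpr (hsne u hu))
  have hsinCc : Continuous (fun u : ℝ => ((Real.sin u : ℝ) : ℂ)) :=
    Complex.continuous_ofReal.comp Real.continuous_sin
  have hcosCc : Continuous (fun u : ℝ => ((Real.cos u : ℝ) : ℂ)) :=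
    Complex.continuous_ofReal.comp Real.continuous_cos
  have hh'c : ContinuousOn h' (Set.Icc α β) := by
    apply ContinuousOn.sub
    · exact ((continuousOn_const.mul hG').div
        (continuousOn_const.mul hsinCc.continuousOn) hDne)
    · apply ContinuousOn.div
      · exact (continuousOn_const.mul hGc).mul hcosCc.continuousOn
      · exact continuousOn_const.mul ((hsinCc.pow 2).continuousOn)
      · intro u hu
        exact mul_ne_zero (by exact_mod_cast ne_of_gt hlam0)
          (pow_ne_zero 2 (Complex.ofReal_ne_zero.mpr (hsne u hu)))
  have II1 : IntervalIntegrable (fun u => h' u * F u) volume α β := by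
    apply ContinuousOn.intervalIntegrable
    rw [huIcc]; exact hh'c.mul hFc.continuousOn
  have II2 : IntervalIntegrable (fun u => G u * F u) volume α β := by
    apply ContinuousOn.intervalIntegrable
    rw [huIcc]; exact hGc.mul hFc.continuousOn
  have key : (∫ u in α..β, (h' u * F u + G u * F u)) = h β * F β - h α * F α := by
    apply integral_eq_sub_of_hasDerivAt
    · intro u hu
      exact hder u (huIcc ▸ hu)
    · exact II1.add II2
  have hsplit : (∫ u in α..β, G u * F u)
      = (h β * F β - h α * F α) - ∫ u in α..β, h' u * F u := by
    rw [← key, integral_add II1 II2]; ring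
  -- norm facts
  have hnormF : ∀ u : ℝ, ‖F u‖ = 1 := fun u => norm_phaseExp lam u
  have hA0 : 0 ≤ A := le_trans (norm_nonneg _) (hA α ⟨le_refl _, hαβ⟩)
  have hB0 : 0 ≤ B := le_trans (norm_nonneg _) (hB α ⟨le_refl _, hαβ⟩)
  have hlmpos : 0 < lam * m := mul_pos hlam0 hm
  have hnormh : ∀ u ∈ Set.Icc α β, ‖h u‖ ≤ A / (lam * m) := by
    intro u hu
    have h1 : ‖h u‖ = ‖G u‖ / (lam * |Real.sin u|) := by
      rw [hh]
      simp only [norm_div, norm_mul, Complex.norm_I, one_mul, Complex.norm_real,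
        Real.norm_eq_abs]
      rw [abs_of_pos hlam0]
    rw [h1]
    apply div_le_div₀ hA0 (hA u hu) hlmpos
    exact mul_le_mul_of_nonneg_left (hsin u hu) (le_of_lt hlam0)
  have hbdry : ‖h β * F β - h α * F α‖ ≤ 2 * A / (lam * m) := by
    calc ‖h β * F β - h α * F α‖ ≤ ‖h β * F β‖ + ‖h α * F α‖ := norm_sub_le _ _
      _ = ‖h β‖ + ‖h α‖ := by rw [norm_mul, norm_mul, hnormF, hnormF, mul_one, mul_one]
      _ ≤ A / (lam * m) + A / (lam * m) := add_le_add
          (hnormh β ⟨hαβ, le_refl _⟩) (hnormh α ⟨le_refl _, hαβ⟩)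
      _ = 2 * A / (lam * m) := by ring
  -- bound on ‖h'‖
  set Φ : ℝ → ℝ := fun u => B / (lam * m) + (A / lam) * (|Real.cos u| / Real.sin u ^ 2)
    with hΦ
  have hΦbound : ∀ u ∈ Set.Icc α β, ‖h' u * F u‖ ≤ Φ u := by
    intro u hu
    rw [norm_mul, hnormF, mul_one]
    have e1 : ‖Complex.I * G' u / ((lam : ℂ) * (Real.sin u : ℂ))‖
        = ‖G' u‖ / (lam * |Real.sin u|) := by
      simp only [norm_div, norm_mul, Complex.norm_I, one_mul, Complex.norm_real,
        Real.norm_eq_abs]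
      rw [abs_of_pos hlam0]
    have e2 : ‖Complex.I * G u * (Real.cos u : ℂ) / ((lam : ℂ) * (Real.sin u : ℂ) ^ 2)‖
        = ‖G u‖ * |Real.cos u| / (lam * Real.sin u ^ 2) := by
      simp only [norm_div, norm_mul, norm_pow, Complex.norm_I, one_mul, Complex.norm_real,
        Real.norm_eq_abs]
      rw [abs_of_pos hlam0, sq_abs]
    have habs : (0:ℝ) < |Real.sin u| := lt_of_lt_of_le hm (hsin u hu)
    have hsq : (0:ℝ) < Real.sin u ^ 2 := by rw [← sq_abs]; exact pow_pos habs 2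
    calc ‖h' u‖ ≤ ‖Complex.I * G' u / ((lam : ℂ) * (Real.sin u : ℂ))‖
          + ‖Complex.I * G u * (Real.cos u : ℂ) / ((lam : ℂ) * (Real.sin u : ℂ) ^ 2)‖ := by
          rw [hh']; exact norm_sub_le _ _
      _ = ‖G' u‖ / (lam * |Real.sin u|) + ‖G u‖ * |Real.cos u| / (lam * Real.sin u ^ 2) := by
          rw [e1, e2]
      _ ≤ B / (lam * m) + (A / lam) * (|Real.cos u| / Real.sin u ^ 2) := by
          apply add_le_add
          · apply div_le_div₀ hB0 (hB u hu) hlmpos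
            exact mul_le_mul_of_nonneg_left (hsin u hu) (le_of_lt hlam0)
          · rw [div_mul_div_comm, mul_comm lam (Real.sin u ^ 2)]
            apply div_le_div_of_nonneg_right ?_ (by positivity)
            exact mul_le_mul_of_nonneg_right (hA u hu) (abs_nonneg _)
      _ = Φ u := rfl
  -- integrability of Φ and pieces
  have hq0 : ∀ u ∈ Set.Icc α β, (0:ℝ) < Real.sin u ^ 2 := by
    intro u hu
    rw [← sq_abs]; exact pow_pos (lt_of_lt_of_le hm (hsin u hu)) 2
  have hqcont : ContinuousOn (fun u => |Real.cos u| / Real.sin u ^ 2) (Set.Icc α β) := by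
    apply ContinuousOn.div Real.continuous_cos.abs.continuousOn
      ((Real.continuous_sin.pow 2).continuousOn)
    intro u hu; exact ne_of_gt (hq0 u hu)
  have IIq : IntervalIntegrable (fun u => |Real.cos u| / Real.sin u ^ 2) volume α β := by
    apply ContinuousOn.intervalIntegrable; rw [huIcc]; exact hqcont
  have IIΦ : IntervalIntegrable Φ volume α β :=
    intervalIntegrable_const.add (IIq.const_mul _)
  -- the J integral
  set J := ∫ u in α..β, |Real.cos u| / Real.sin u ^ 2 with hJdef
  have hJ0 : 0 ≤ J := by
    apply intervalIntegral.integral_nonneg hαβ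
    intro u hu; positivity
  have IIw : IntervalIntegrable (fun u => -Real.cos u / Real.sin u ^ 2) volume α β := by
    apply ContinuousOn.intervalIntegrable; rw [huIcc]
    apply ContinuousOn.div Real.continuous_cos.neg.continuousOn
      ((Real.continuous_sin.pow 2).continuousOn)
    intro u hu; exact ne_of_gt (hq0 u hu)
  have keyw : (∫ u in α..β, -Real.cos u / Real.sin u ^ 2)
      = (Real.sin β)⁻¹ - (Real.sin α)⁻¹ := by
    apply integral_eq_sub_of_hasDerivAt
    · intro u hu
      exact (Real.hasDerivAt_sin u).inv (hsne u (huIcc ▸ hu))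
    · exact IIw
  have hwa : |(Real.sin α)⁻¹| ≤ 1 / m := by
    rw [abs_inv, one_div]
    exact inv_anti₀ hm (hsin α ⟨le_refl _, hαβ⟩)
  have hwb : |(Real.sin β)⁻¹| ≤ 1 / m := by
    rw [abs_inv, one_div]
    exact inv_anti₀ hm (hsin β ⟨hαβ, le_refl _⟩)
  have hJle : J ≤ 2 / m := by
    have h2m : 2 / m = 1 / m + 1 / m := by ring
    obtain ⟨ha1, ha2⟩ := abs_le.mp hwa
    obtain ⟨hb1, hb2⟩ := abs_le.mp hwb
    rcases hcos with hc | hc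
    · have hJeq : J = -((Real.sin β)⁻¹ - (Real.sin α)⁻¹) := by
        rw [hJdef, ← keyw, ← intervalIntegral.integral_neg]
        apply integral_congr
        intro u hu
        rw [huIcc] at hu
        simp only [neg_div, neg_neg]
        rw [abs_of_nonneg (hc u hu)]
      rw [hJeq]; linarith
    · have hJeq : J = (Real.sin β)⁻¹ - (Real.sin α)⁻¹ := by
        rw [hJdef, ← keyw]
        apply integral_congr
        intro u hu
        rw [huIcc] at hu
        simp only [neg_div]
        rw [abs_of_nonpos (hc u hu), neg_div]
      rw [hJeq]; linarith
  -- putting it together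
  have hΦint : (∫ u in α..β, Φ u) = (β - α) * (B / (lam * m)) + (A / lam) * J := by
    rw [hΦ]
    rw [intervalIntegral.integral_add intervalIntegrable_const (IIq.const_mul _)]
    rw [intervalIntegral.integral_const, intervalIntegral.integral_const_mul]
    simp [smul_eq_mul]
    exact Or.inl hJdef.symm
  have hnorm2 : ‖∫ u in α..β, h' u * F u‖ ≤ (∫ u in α..β, Φ u) := by
    calc ‖∫ u in α..β, h' u * F u‖ ≤ ∫ u in α..β, ‖h' u * F u‖ :=
          norm_integral_le_integral_norm hαβ
      _ ≤ ∫ u in α..β, Φ u := by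
          apply integral_mono_on hαβ II1.norm IIΦ
          exact hΦbound
  have hfinal : ‖∫ u in α..β, G u * F u‖
      ≤ 2 * A / (lam * m) + ((β - α) * (B / (lam * m)) + (A / lam) * (2 / m)) := by
    rw [hsplit]
    calc ‖(h β * F β - h α * F α) - ∫ u in α..β, h' u * F u‖
        ≤ ‖h β * F β - h α * F α‖ + ‖∫ u in α..β, h' u * F u‖ := norm_sub_le _ _
      _ ≤ 2 * A / (lam * m) + ((β - α) * (B / (lam * m)) + (A / lam) * J) := by
          apply add_le_add hbdry
          rw [← hΦint]; exact hnorm2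
      _ ≤ _ := by
          apply add_le_add_right
          apply add_le_add_right
          exact mul_le_mul_of_nonneg_left hJle (by positivity)
  calc ‖∫ u in α..β, G u * F u‖
      ≤ 2 * A / (lam * m) + ((β - α) * (B / (lam * m)) + (A / lam) * (2 / m)) := hfinal
    _ = (4 * A + B * (β - α)) / (lam * m) := by
        field_simp
        ring

lemma abs_sin_sub_int_mul_pi (x : ℝ) (n : ℤ) : |Real.sin (x + n * π)| = |Real.sin x| := by
  rw [Real.sin_add_int_mul_pi, abs_mul]
  have h1 : |(-1:ℝ)^n| = 1 := by
    rcases Int.even_or_odd n with h | h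
    · rw [h.neg_one_zpow]; norm_num
    · rw [Odd.neg_one_zpow h]; norm_num
  rw [h1, one_mul]

set_option maxHeartbeats 1000000 in
lemma quarter_bound (G G' : ℝ → ℂ) (α β lam A B : ℝ) (k : ℤ)
    (hαβ : α ≤ β) (hlam : 1 ≤ lam)
    (hq : Set.Icc α β ⊆ Set.Icc ((k : ℝ) * (π/2)) (((k : ℝ)+1) * (π/2)))
    (hG : ∀ u ∈ Set.Icc α β, HasDerivAt G (G' u) u)
    (hG' : ContinuousOn G' (Set.Icc α β))
    (hA : ∀ u ∈ Set.Icc α β, ‖G u‖ ≤ A)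
    (hB : ∀ u ∈ Set.Icc α β, ‖G' u‖ ≤ B) :
    ‖∫ u in α..β, G u * Complex.exp (Complex.I * lam * Real.cos u)‖
      ≤ (A + (4/3) * (4*A + B*(π/2))) * lam ^ (-(1/2:ℝ)) := by
  have hlam0 : (0:ℝ) < lam := lt_of_lt_of_le one_pos hlam
  have hπ : (0:ℝ) < π := Real.pi_pos
  have h2π : (1:ℝ) ≤ π/2 := by linarith [Real.two_le_pi]
  set δ : ℝ := lam ^ (-(1/2:ℝ)) with hδdef
  have hδpos : 0 < δ := Real.rpow_pos_of_pos hlam0 _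
  have hδ1 : δ ≤ 1 := Real.rpow_le_one_of_one_le_of_nonpos hlam (by norm_num)
  have hδδ : lam * δ * δ = 1 := by
    have h2 : δ * δ = lam ^ (-(1:ℝ)) := by
      rw [hδdef, ← Real.rpow_add hlam0]; norm_num
    rw [mul_assoc, h2, Real.rpow_neg_one, mul_inv_cancel₀ (ne_of_gt hlam0)]
  have hsinδ : (3/4) * δ ≤ Real.sin δ := by
    have h1 := Real.sin_gt_sub_cube hδpos
    nlinarith [pow_pos hδpos 3, sq_nonneg δ, sq_nonneg (1 - δ)]
  have hsinδpos : 0 < Real.sin δ := lt_of_lt_of_le (by linarith) hsinδ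
  have hA0 : 0 ≤ A := le_trans (norm_nonneg _) (hA α ⟨le_refl _, hαβ⟩)
  have hB0 : 0 ≤ B := le_trans (norm_nonneg _) (hB α ⟨le_refl _, hαβ⟩)
  have hGc : ContinuousOn G (Set.Icc α β) := fun u hu =>
    (hG u hu).continuousAt.continuousWithinAt
  have hFc : Continuous (fun u : ℝ => Complex.exp (Complex.I * lam * Real.cos u)) := by
    apply Complex.continuous_exp.comp
    exact continuous_const.mul (Complex.continuous_ofReal.comp Real.continuous_cos)
  have hGFc : ContinuousOn (fun u => G u * Complex.exp (Complex.I * lam * Real.cos u))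
      (Set.Icc α β) := hGc.mul hFc.continuousOn
  have hII : ∀ x y, α ≤ x → x ≤ y → y ≤ β →
      IntervalIntegrable (fun u => G u * Complex.exp (Complex.I * lam * Real.cos u))
        volume x y := by
    intro x y hx hxy hy
    apply ContinuousOn.intervalIntegrable
    apply hGFc.mono
    rw [Set.uIcc_of_le hxy]
    exact Set.Icc_subset_Icc hx hy
  -- trivial bound on short subintervals
  have htriv : ∀ x y, α ≤ x → x ≤ y → y ≤ β → y - x ≤ δ →
      ‖∫ u in x..y, G u * Complex.exp (Complex.I * lam * Real.cos u)‖ ≤ A * δ := by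
    intro x y hx hxy hy hlen
    have h1 : ‖∫ u in x..y, G u * Complex.exp (Complex.I * lam * Real.cos u)‖
        ≤ A * |y - x| := by
      apply intervalIntegral.norm_integral_le_of_norm_le_const
      intro t ht
      rw [Set.uIoc_of_le hxy] at ht
      have ht' : t ∈ Set.Icc α β := ⟨le_trans hx (le_of_lt ht.1), le_trans ht.2 hy⟩
      rw [norm_mul, norm_phaseExp, mul_one]
      exact hA t ht'
    rw [abs_of_nonneg (by linarith)] at h1
    exact le_trans h1 (mul_le_mul_of_nonneg_left hlen hA0)
  -- sign transfer for cos
  have hsign : ∀ (n : ℤ) (s : Set ℝ),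
      ((∀ u ∈ s, 0 ≤ Real.cos (u - n*π)) ∨ (∀ u ∈ s, Real.cos (u - n*π) ≤ 0)) →
      ((∀ u ∈ s, 0 ≤ Real.cos u) ∨ (∀ u ∈ s, Real.cos u ≤ 0)) := by
    intro n s hs
    have hc : ∀ u : ℝ, Real.cos u = (-1:ℝ)^n * Real.cos (u - n*π) := by
      intro u
      have h := Real.cos_add_int_mul_pi (u - n*π) n
      rw [sub_add_cancel] at h
      exact h
    rcases le_or_gt 0 ((-1:ℝ)^n) with hp | hp
    · rcases hs with hs | hs
      · left; intro u hu; rw [hc u]; exact mul_nonneg hp (hs u hu)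
      · right; intro u hu; rw [hc u]; exact mul_nonpos_of_nonneg_of_nonpos hp (hs u hu)
    · rcases hs with hs | hs
      · right; intro u hu; rw [hc u]; exact mul_nonpos_of_nonpos_of_nonneg hp.le (hs u hu)
      · left; intro u hu; rw [hc u]
        have h2 := mul_nonneg (neg_nonneg.mpr hp.le) (neg_nonneg.mpr (hs u hu))
        simpa [neg_mul_neg] using h2
  have habs_sin : ∀ (n : ℤ) (u : ℝ), |Real.sin u| = |Real.sin (u - n*π)| := by
    intro n u
    conv_lhs => rw [show u = (u - n*π) + n*π by ring]
    rw [abs_sin_sub_int_mul_pi]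
  -- core estimate on far-from-stationary subintervals
  have hkey : ∀ x y, α ≤ x → x ≤ y → y ≤ β →
      (∀ u ∈ Set.Icc x y, Real.sin δ ≤ |Real.sin u|) →
      ((∀ u ∈ Set.Icc x y, 0 ≤ Real.cos u) ∨ (∀ u ∈ Set.Icc x y, Real.cos u ≤ 0)) →
      ‖∫ u in x..y, G u * Complex.exp (Complex.I * lam * Real.cos u)‖
        ≤ (4/3) * (4*A + B*(π/2)) * δ := by
    intro x y hx hxy hy hsin hcos
    have hsub : Set.Icc x y ⊆ Set.Icc α β := Set.Icc_subset_Icc hx hy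
    have h1 := core_bound G G' x y lam (Real.sin δ) A B hxy hlam hsinδpos hsin hcos
      (fun u hu => hG u (hsub hu)) (hG'.mono hsub)
      (fun u hu => hA u (hsub hu)) (fun u hu => hB u (hsub hu))
    have hlen : y - x ≤ π/2 := by
      have h2 := (hq ⟨hx, le_trans hxy hy⟩).1
      have h3 := (hq ⟨le_trans hx hxy, hy⟩).2
      have h4 : ((k:ℝ)+1)*(π/2) - (k:ℝ)*(π/2) = π/2 := by ring
      linarith
    have h4 : (4*A + B*(y-x)) / (lam * Real.sin δ)
        ≤ (4*A + B*(π/2)) / (lam * Real.sin δ) := by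
      apply div_le_div_of_nonneg_right ?_ (by positivity)
      nlinarith [mul_le_mul_of_nonneg_left hlen hB0]
    have h5 : (4*A + B*(π/2)) / (lam * Real.sin δ) ≤ (4/3) * (4*A + B*(π/2)) * δ := by
      have hc1 : lam * ((3/4) * δ) ≤ lam * Real.sin δ :=
        mul_le_mul_of_nonneg_left hsinδ (le_of_lt hlam0)
      have hc0 : (0:ℝ) < lam * ((3/4) * δ) := by positivity
      calc (4*A + B*(π/2)) / (lam * Real.sin δ)
          ≤ (4*A + B*(π/2)) / (lam * ((3/4) * δ)) := by
            apply div_le_div_of_nonneg_left (by positivity) hc0 hc1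
        _ = (4/3) * (4*A + B*(π/2)) * δ := by
            rw [div_eq_iff (ne_of_gt hc0)]
            linear_combination (-(4*A + B*(π/2))) * hδδ
    exact le_trans h1 (le_trans h4 h5)
  rcases Int.even_or_odd k with ⟨n, hn⟩ | ⟨n, hn⟩
  · -- even k : quarter [nπ, nπ + π/2], stationary point at left end
    have hk : (k:ℝ) = (n:ℝ) + (n:ℝ) := by exact_mod_cast hn
    have e1 : (k:ℝ)*(π/2) = (n:ℝ)*π := by rw [hk]; ring
    have e2 : ((k:ℝ)+1)*(π/2) = (n:ℝ)*π + π/2 := by rw [hk]; ring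
    have hql : ∀ u ∈ Set.Icc α β, (n:ℝ)*π ≤ u ∧ u ≤ (n:ℝ)*π + π/2 := by
      intro u hu
      have h1 := (hq hu).1
      have h2 := (hq hu).2
      constructor <;> linarith
    set γ := max α (min β ((n:ℝ)*π + δ)) with hγ
    have hαγ : α ≤ γ := le_max_left _ _
    have hγβ : γ ≤ β := max_le hαβ (min_le_left _ _)
    have hα1 : (n:ℝ)*π ≤ α := (hql α ⟨le_rfl, hαβ⟩).1
    have htriv1 : ‖∫ u in α..γ, G u * Complex.exp (Complex.I * lam * Real.cos u)‖
        ≤ A * δ := by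
      apply htriv α γ le_rfl hαγ hγβ
      have h3 : γ ≤ α + δ := max_le (by linarith) (le_trans (min_le_right _ _) (by linarith))
      linarith
    by_cases hc : β ≤ (n:ℝ)*π + δ
    · have hγeq : γ = β := by rw [hγ, min_eq_left hc, max_eq_right hαβ]
      rw [hγeq] at htriv1
      calc ‖∫ u in α..β, G u * Complex.exp (Complex.I * lam * Real.cos u)‖
          ≤ A * δ := htriv1
        _ ≤ (A + (4/3) * (4*A + B*(π/2))) * δ := by
            have hpos : 0 ≤ (4/3) * (4*A + B*(π/2)) * δ := by positivity
            nlinarith [hpos]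
    · push_neg at hc
      have hγeq : γ = max α ((n:ℝ)*π + δ) := by rw [hγ, min_eq_right hc.le]
      have hγ2 : (n:ℝ)*π + δ ≤ γ := by rw [hγeq]; exact le_max_right _ _
      have hmain : ‖∫ u in γ..β, G u * Complex.exp (Complex.I * lam * Real.cos u)‖
          ≤ (4/3) * (4*A + B*(π/2)) * δ := by
        apply hkey γ β hαγ hγβ le_rfl
        · intro u hu
          have hu1 : (n:ℝ)*π + δ ≤ u := le_trans hγ2 hu.1
          have hu2 : u ≤ (n:ℝ)*π + π/2 := (hql u ⟨le_trans hαγ hu.1, hu.2⟩).2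
          rw [habs_sin n u]
          have hs : Real.sin δ ≤ Real.sin (u - (n:ℝ)*π) :=
            Real.sin_le_sin_of_le_of_le_pi_div_two (by linarith) (by linarith) (by linarith)
          rw [abs_of_nonneg (by linarith : (0:ℝ) ≤ Real.sin (u - (n:ℝ)*π))]
          exact hs
        · apply hsign n
          left
          intro u hu
          have hu1 : (n:ℝ)*π + δ ≤ u := le_trans hγ2 hu.1
          have hu2 : u ≤ (n:ℝ)*π + π/2 := (hql u ⟨le_trans hαγ hu.1, hu.2⟩).2
          apply Real.cos_nonneg_of_mem_Icc
          constructor <;> [skip; skip] <;> linarith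
      have hsplit := (integral_add_adjacent_intervals
        (hII α γ le_rfl hαγ hγβ) (hII γ β hαγ hγβ le_rfl)).symm
      calc ‖∫ u in α..β, G u * Complex.exp (Complex.I * lam * Real.cos u)‖
          = ‖(∫ u in α..γ, G u * Complex.exp (Complex.I * lam * Real.cos u))
            + (∫ u in γ..β, G u * Complex.exp (Complex.I * lam * Real.cos u))‖ := by
            rw [hsplit]
        _ ≤ ‖∫ u in α..γ, G u * Complex.exp (Complex.I * lam * Real.cos u)‖
            + ‖∫ u in γ..β, G u * Complex.exp (Complex.I * lam * Real.cos u)‖ :=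
            norm_add_le _ _
        _ ≤ A * δ + (4/3) * (4*A + B*(π/2)) * δ := add_le_add htriv1 hmain
        _ = (A + (4/3) * (4*A + B*(π/2))) * δ := by ring
  · -- odd k : quarter [nπ + π/2, (n+1)π], stationary point at right end
    have hk : (k:ℝ) = 2*(n:ℝ) + 1 := by exact_mod_cast hn
    have e1 : (k:ℝ)*(π/2) = (n:ℝ)*π + π/2 := by rw [hk]; ring
    have e2 : ((k:ℝ)+1)*(π/2) = (n:ℝ)*π + π := by rw [hk]; ring
    have hql : ∀ u ∈ Set.Icc α β, (n:ℝ)*π + π/2 ≤ u ∧ u ≤ (n:ℝ)*π + π := by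
      intro u hu
      have h1 := (hq hu).1
      have h2 := (hq hu).2
      constructor <;> linarith
    set γ := min β (max α ((n:ℝ)*π + π - δ)) with hγ
    have hγβ : γ ≤ β := min_le_left _ _
    have hαγ : α ≤ γ := le_min hαβ (le_max_left _ _)
    have hβ1 : β ≤ (n:ℝ)*π + π := (hql β ⟨hαβ, le_rfl⟩).2
    have htriv1 : ‖∫ u in γ..β, G u * Complex.exp (Complex.I * lam * Real.cos u)‖
        ≤ A * δ := by
      apply htriv γ β hαγ hγβ le_rfl
      have h3 : β - δ ≤ γ :=
        le_min (by linarith) (le_trans (by linarith) (le_max_right _ _))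
      linarith
    by_cases hc : (n:ℝ)*π + π - δ ≤ α
    · have hγeq : γ = α := by rw [hγ, max_eq_left hc, min_eq_right hαβ]
      rw [hγeq] at htriv1
      calc ‖∫ u in α..β, G u * Complex.exp (Complex.I * lam * Real.cos u)‖
          ≤ A * δ := htriv1
        _ ≤ (A + (4/3) * (4*A + B*(π/2))) * δ := by
            have hpos : 0 ≤ (4/3) * (4*A + B*(π/2)) * δ := by positivity
            nlinarith [hpos]
    · push_neg at hc
      have hγeq : γ = min β ((n:ℝ)*π + π - δ) := by rw [hγ, max_eq_right hc.le]
      have hγ2 : γ ≤ (n:ℝ)*π + π - δ := by rw [hγeq]; exact min_le_right _ _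
      have hmain : ‖∫ u in α..γ, G u * Complex.exp (Complex.I * lam * Real.cos u)‖
          ≤ (4/3) * (4*A + B*(π/2)) * δ := by
        apply hkey α γ le_rfl hαγ hγβ
        · intro u hu
          have hu1 : (n:ℝ)*π + π/2 ≤ u := (hql u ⟨hu.1, le_trans hu.2 hγβ⟩).1
          have hu2 : u ≤ (n:ℝ)*π + π - δ := le_trans hu.2 hγ2
          rw [habs_sin n u]
          have hs : Real.sin δ ≤ Real.sin (π - (u - (n:ℝ)*π)) :=
            Real.sin_le_sin_of_le_of_le_pi_div_two (by linarith) (by linarith) (by linarith)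
          rw [Real.sin_pi_sub] at hs
          rw [abs_of_nonneg (by linarith : (0:ℝ) ≤ Real.sin (u - (n:ℝ)*π))]
          exact hs
        · apply hsign n
          right
          intro u hu
          have hu1 : (n:ℝ)*π + π/2 ≤ u := (hql u ⟨hu.1, le_trans hu.2 hγβ⟩).1
          have hu2 : u ≤ (n:ℝ)*π + π - δ := le_trans hu.2 hγ2
          apply Real.cos_nonpos_of_pi_div_two_le_of_le (by linarith) (by linarith)
      have hsplit := (integral_add_adjacent_intervals
        (hII α γ le_rfl hαγ hγβ) (hII γ β hαγ hγβ le_rfl)).symm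
      calc ‖∫ u in α..β, G u * Complex.exp (Complex.I * lam * Real.cos u)‖
          = ‖(∫ u in α..γ, G u * Complex.exp (Complex.I * lam * Real.cos u))
            + (∫ u in γ..β, G u * Complex.exp (Complex.I * lam * Real.cos u))‖ := by
            rw [hsplit]
        _ ≤ ‖∫ u in α..γ, G u * Complex.exp (Complex.I * lam * Real.cos u)‖
            + ‖∫ u in γ..β, G u * Complex.exp (Complex.I * lam * Real.cos u)‖ :=
            norm_add_le _ _
        _ ≤ (4/3) * (4*A + B*(π/2)) * δ + A * δ := add_le_add hmain htriv1
        _ = (A + (4/3) * (4*A + B*(π/2))) * δ := by ring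

set_option maxHeartbeats 1000000 in
lemma interval_bound (G G' : ℝ → ℂ) (c d lam A B : ℝ)
    (hcd : c ≤ d) (hlen : d - c ≤ 2 * π) (hlam : 1 ≤ lam)
    (hG : ∀ u ∈ Set.Icc c d, HasDerivAt G (G' u) u)
    (hG' : ContinuousOn G' (Set.Icc c d))
    (hA : ∀ u ∈ Set.Icc c d, ‖G u‖ ≤ A)
    (hB : ∀ u ∈ Set.Icc c d, ‖G' u‖ ≤ B) :
    ‖∫ u in c..d, G u * Complex.exp (Complex.I * lam * Real.cos u)‖
      ≤ 5 * (A + (4/3) * (4*A + B*(π/2))) * lam ^ (-(1/2:ℝ)) := by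
  have hlam0 : (0:ℝ) < lam := lt_of_lt_of_le one_pos hlam
  have hπ : (0:ℝ) < π := Real.pi_pos
  have hδpos : (0:ℝ) < lam ^ (-(1/2:ℝ)) := Real.rpow_pos_of_pos hlam0 _
  have hA0 : 0 ≤ A := le_trans (norm_nonneg _) (hA c ⟨le_refl _, hcd⟩)
  have hB0 : 0 ≤ B := le_trans (norm_nonneg _) (hB c ⟨le_refl _, hcd⟩)
  set j₀ : ℤ := ⌊c / (π/2)⌋ with hj₀
  set q : ℤ → ℝ := fun i => ((j₀ + i : ℤ) : ℝ) * (π/2) with hq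
  set t : ℤ → ℝ := fun i => min d (max c (q i)) with ht
  have hq0c : q 0 ≤ c := by
    rw [hq]
    simp only [add_zero]
    rw [← le_div_iff₀ (by positivity)]
    exact Int.floor_le _
  have hcq1 : c < q 1 := by
    rw [hq]
    have h1 : c / (π/2) < (j₀:ℝ) + 1 := Int.lt_floor_add_one _
    rw [← div_lt_iff₀ (by positivity)]
    push_cast
    linarith
  have hdq5 : d ≤ q 5 := by
    have h1 : c < q 1 := hcq1
    have : q 5 = q 1 + 2 * π := by rw [hq]; push_cast; ring
    linarith
  have ht0 : t 0 = c := by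
    rw [ht]; simp only []
    rw [max_eq_left hq0c, min_eq_right hcd]
  have ht5 : t 5 = d := by
    rw [ht]; simp only []
    exact min_eq_left (le_trans hdq5 (le_max_right _ _))
  have hqmono : ∀ i : ℤ, q i ≤ q (i + 1) := by
    intro i
    rw [hq]; simp only []
    apply mul_le_mul_of_nonneg_right _ (by positivity)
    push_cast; linarith
  have htmono : ∀ i : ℤ, t i ≤ t (i + 1) := fun i =>
    min_le_min le_rfl (max_le_max le_rfl (hqmono i))
  have htc : ∀ i : ℤ, c ≤ t i := fun i => le_min hcd (le_max_left _ _)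
  have htd : ∀ i : ℤ, t i ≤ d := fun i => min_le_left _ _
  have hII : ∀ x y, c ≤ x → x ≤ y → y ≤ d →
      IntervalIntegrable (fun u => G u * Complex.exp (Complex.I * lam * Real.cos u))
        volume x y := by
    intro x y hx hxy hy
    apply ContinuousOn.intervalIntegrable
    have hGFc : ContinuousOn (fun u => G u * Complex.exp (Complex.I * lam * Real.cos u))
        (Set.Icc c d) := by
      apply ContinuousOn.mul
      · exact fun u hu => (hG u hu).continuousAt.continuousWithinAt
      · apply Continuous.continuousOn
        apply Complex.continuous_exp.comp
        exact continuous_const.mul (Complex.continuous_ofReal.comp Real.continuous_cos)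
    apply hGFc.mono
    rw [Set.uIcc_of_le hxy]
    exact Set.Icc_subset_Icc hx hy
  -- bound for each piece
  have hpiece : ∀ i : ℤ,
      ‖∫ u in t i..t (i+1), G u * Complex.exp (Complex.I * lam * Real.cos u)‖
        ≤ (A + (4/3) * (4*A + B*(π/2))) * lam ^ (-(1/2:ℝ)) := by
    intro i
    rcases eq_or_lt_of_le (htmono i) with heq | hlt
    · rw [← heq, intervalIntegral.integral_same, norm_zero]
      positivity
    · apply quarter_bound G G' (t i) (t (i+1)) lam A B (j₀ + i) (htmono i) hlam
      · -- quarter inclusion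
        have h1 : max c (q i) ≤ d := by
          by_contra hcon
          push_neg at hcon
          have : t i = d := min_eq_left hcon.le
          have := htd (i+1)
          linarith
        have h2 : q i ≤ t i := by
          rw [ht]; simp only []
          rw [min_eq_right h1]
          exact le_max_right _ _
        have h3 : c ≤ q (i+1) := by
          by_contra hcon
          push_neg at hcon
          have : t (i+1) = c := by
            rw [ht]; simp only []
            rw [max_eq_left hcon.le, min_eq_right hcd]
          have := htc i
          linarith
        have h4 : t (i+1) ≤ q (i+1) := by
          rw [ht]; simp only []
          exact le_trans (min_le_right _ _) (le_of_eq (max_eq_right h3))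
        have hqq : q (i+1) = (((j₀ + i : ℤ):ℝ) + 1) * (π/2) := by
          rw [hq]; push_cast; ring
        apply Set.Icc_subset_Icc
        · rw [hq] at h2; exact h2
        · rw [← hqq]; exact h4
      · exact fun u hu => hG u ⟨le_trans (htc i) hu.1, le_trans hu.2 (htd (i+1))⟩
      · exact hG'.mono (Set.Icc_subset_Icc (htc i) (htd (i+1)))
      · exact fun u hu => hA u ⟨le_trans (htc i) hu.1, le_trans hu.2 (htd (i+1))⟩
      · exact fun u hu => hB u ⟨le_trans (htc i) hu.1, le_trans hu.2 (htd (i+1))⟩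
  -- split the integral into 5 pieces
  have hII01 := hII (t 0) (t 1) (htc 0) (htmono 0) (htd 1)
  have hII12 := hII (t 1) (t 2) (htc 1) (htmono 1) (htd 2)
  have hII23 := hII (t 2) (t 3) (htc 2) (htmono 2) (htd 3)
  have hII34 := hII (t 3) (t 4) (htc 3) (htmono 3) (htd 4)
  have hII45 := hII (t 4) (t 5) (htc 4) (htmono 4) (htd 5)
  have hII15 := hII (t 1) (t 5) (htc 1) (le_trans (htmono 1) (le_trans (htmono 2) (le_trans (htmono 3) (htmono 4)))) (htd 5)
  have hII25 := hII (t 2) (t 5) (htc 2) (le_trans (htmono 2) (le_trans (htmono 3) (htmono 4))) (htd 5)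
  have hII35 := hII (t 3) (t 5) (htc 3) (le_trans (htmono 3) (htmono 4)) (htd 5)
  have e1 := integral_add_adjacent_intervals hII01 hII15
  have e2 := integral_add_adjacent_intervals hII12 hII25
  have e3 := integral_add_adjacent_intervals hII23 hII35
  have e4 := integral_add_adjacent_intervals hII34 hII45
  have hp0 := hpiece 0
  have hp1 := hpiece 1
  have hp2 := hpiece 2
  have hp3 := hpiece 3
  have hp4 := hpiece 4
  rw [show (0:ℤ)+1 = 1 by norm_num] at hp0
  rw [show (1:ℤ)+1 = 2 by norm_num] at hp1
  rw [show (2:ℤ)+1 = 3 by norm_num] at hp2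
  rw [show (3:ℤ)+1 = 4 by norm_num] at hp3
  rw [show (4:ℤ)+1 = 5 by norm_num] at hp4
  have hsum : (∫ u in c..d, G u * Complex.exp (Complex.I * lam * Real.cos u))
      = (∫ u in (t 0)..(t 1), G u * Complex.exp (Complex.I * lam * Real.cos u))
      + (∫ u in (t 1)..(t 2), G u * Complex.exp (Complex.I * lam * Real.cos u))
      + (∫ u in (t 2)..(t 3), G u * Complex.exp (Complex.I * lam * Real.cos u))
      + (∫ u in (t 3)..(t 4), G u * Complex.exp (Complex.I * lam * Real.cos u))
      + (∫ u in (t 4)..(t 5), G u * Complex.exp (Complex.I * lam * Real.cos u)) := by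
    rw [← ht0, ← ht5, ← e1, ← e2, ← e3, ← e4]
    ring
  rw [hsum]
  calc ‖_ + _ + _ + _ + _‖ ≤ _ :=
        le_trans (norm_add_le _ _) (add_le_add (le_trans (norm_add_le _ _)
          (add_le_add (le_trans (norm_add_le _ _) (add_le_add (le_trans (norm_add_le _ _)
            (add_le_add hp0 hp1)) hp2)) hp3)) hp4)
    _ ≤ 5 * (A + (4/3) * (4*A + B*(π/2))) * lam ^ (-(1/2:ℝ)) := by
        apply le_of_eq
        ring

/-- Uniform `O(λ^{-1/2})` decay of the oscillatory integral with phase `cos(φ - s)`: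
if `g` is continuously differentiable on `[a, b]` with `b - a ≤ 2π`, then there is a
constant `C > 0` (depending only on `g`, `a`, `b`) such that for all `φ ∈ ℝ` and all
`λ ≥ 1`, `|∫_a^b g(s) exp(iλ cos(φ - s)) ds| ≤ C λ^{-1/2}`. -/
theorem oscillatory_integral_cos_phase_decay
    (a b : ℝ) (hab : a < b) (hlen : b - a ≤ 2 * Real.pi)
    (g g' : ℝ → ℂ)
    (hg : ∀ s ∈ Set.Icc a b, HasDerivAt g (g' s) s)
    (hg' : ContinuousOn g' (Set.Icc a b)) :
    ∃ C : ℝ, 0 < C ∧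
      ∀ (φ lam : ℝ), 1 ≤ lam →
        ‖∫ s in a..b, g s * Complex.exp (Complex.I * lam * Real.cos (φ - s))‖ ≤
          C * lam ^ (-(1 / 2 : ℝ)) := by
  have hπ : (0:ℝ) < π := Real.pi_pos
  have hgc : ContinuousOn g (Set.Icc a b) := fun s hs =>
    (hg s hs).continuousAt.continuousWithinAt
  obtain ⟨A₀, hA₀⟩ := isCompact_Icc.exists_bound_of_continuousOn hgc
  obtain ⟨B₀, hB₀⟩ := isCompact_Icc.exists_bound_of_continuousOn hg'
  set A : ℝ := max A₀ 1 with hAdef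
  set B : ℝ := max B₀ 1 with hBdef
  have hA1 : (1:ℝ) ≤ A := le_max_right _ _
  have hB1 : (1:ℝ) ≤ B := le_max_right _ _
  have hAb : ∀ s ∈ Set.Icc a b, ‖g s‖ ≤ A := fun s hs =>
    le_trans (hA₀ s hs) (le_max_left _ _)
  have hBb : ∀ s ∈ Set.Icc a b, ‖g' s‖ ≤ B := fun s hs =>
    le_trans (hB₀ s hs) (le_max_left _ _)
  refine ⟨5 * (A + (4/3) * (4*A + B*(π/2))), by nlinarith, ?_⟩
  intro φ lam hlam
  -- change of variables s ↦ φ - u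
  set f : ℝ → ℂ := fun u => g (φ - u) * Complex.exp (Complex.I * lam * Real.cos u) with hf
  have hchg : (∫ s in a..b, g s * Complex.exp (Complex.I * lam * Real.cos (φ - s)))
      = ∫ u in (φ - b)..(φ - a), f u := by
    rw [← intervalIntegral.integral_comp_sub_left f φ]
    apply intervalIntegral.integral_congr
    intro s _
    rw [hf]
    simp only [sub_sub_cancel]
  rw [hchg]
  -- apply the interval bound to G(u) = g(φ - u)
  have hmaps : ∀ u ∈ Set.Icc (φ - b) (φ - a), φ - u ∈ Set.Icc a b := by
    intro u hu
    exact ⟨by linarith [hu.2], by linarith [hu.1]⟩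
  apply interval_bound (fun u => g (φ - u)) (fun u => -g' (φ - u)) (φ - b) (φ - a) lam A B
    (by linarith) (by linarith) hlam
  · intro u hu
    exact HasDerivAt.comp_const_sub φ u (hg (φ - u) (hmaps u hu))
  · apply ContinuousOn.neg
    apply hg'.comp (continuous_const.sub continuous_id).continuousOn
    intro u hu
    exact hmaps u hu
  · exact fun u hu => hAb (φ - u) (hmaps u hu)
  · intro u hu
    rw [norm_neg]
    exact hBb (φ - u) (hmaps u hu)
end

section
/- Let U : [θ_c, π−θ_c] × [π+θ_c, 2π−θ_c] → ℂ be continuous and let z ∈ ℝ². Define I(z) := ∫_{θ_c}^{π−θ_c} ∫_{π+θ_c}^{2π−θ_c} ∫_{π+θ_c}^{2π−θ_c} |U(α,θ₁)+U(α,θ₂)|² T(θ₁) e^{−i k₋ z·dᵗ(θ₁)} T(θ₂) e^{i k₋ z·dᵗ(θ₂)} dθ₁ dθ₂ dα − ( ∫_{π+θ_c}^{2π−θ_c} T(θ) e^{i k₋ z·dᵗ(θ)} dθ ) · ( ∫_{θ_c}^{π−θ_c} ∫_{π+θ_c}^{2π−θ_c} |U(α,θ)|² T(θ) e^{−i k₋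 z·dᵗ(θ)} dθ dα ) − ( ∫_{π+θ_c}^{2π−θ_c} T(θ) e^{−i k₋ z·dᵗ(θ)} dθ ) · ( ∫_{θ_c}^{π−θ_c} ∫_{π+θ_c}^{2π−θ_c} |U(α,θ)|² T(θ) e^{i k₋ z·dᵗ(θ)} dθ dα ). Then I(z) = ∫_{θ_c}^{π−θ_c} |v(α)|² dα + ∫_{θ_c}^{π−θ_c} |w(α)|² dα, where v(α) := ∫_{π+θ_c}^{2π−θ_c} U(α,θ) T(θ) e^{−i k₋ z·dᵗ(θ)} dθ and w(α) := ∫_{π+θ_c}^{2π−θ_c} U(α,θ) T(θ) e^{i k₋ z·dᵗ(θ)} dθ. In particular I(z) is a nonnegative real number. -/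
open Real MeasureTheory intervalIntegral

/-- The phase `z · dᵗ(θ) = z₁ cos θᵗ(θ) + z₂ sin θᵗ(θ)`. -/
noncomputable def ph (kp km : ℝ) (z : ℝ × ℝ) (θ : ℝ) : ℝ :=
  z.1 * Real.cos (thetat kp km θ) + z.2 * Real.sin (thetat kp km θ)

open ComplexConjugate in

private lemma ofReal_normSq_c (z : ℂ) : ((‖z‖ ^ 2 : ℝ) : ℂ) = z * conj z := by
  rw [Complex.mul_conj]
  norm_cast
  rw [Complex.normSq_eq_norm_sq]

open ComplexConjugate in
private lemma intervalIntegral_conj {a b : ℝ} (f : ℝ → ℂ) :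
    ∫ x in a..b, conj (f x) = conj (∫ x in a..b, f x) := by
  simp only [intervalIntegral, _root_.integral_conj, map_sub]

open ComplexConjugate in
private lemma key (c d a b : ℝ) (V : ℝ → ℝ → ℂ) (F : ℝ → ℂ)
    (hV : Continuous (Function.uncurry V)) (hF : Continuous F) :
    (∫ α in c..d, ∫ θ₁ in a..b, ∫ θ₂ in a..b,
        ((‖V α θ₁ + V α θ₂‖ ^ 2 : ℝ) : ℂ) * F θ₁ * conj (F θ₂)) -
      (∫ θ in a..b, conj (F θ)) *
        (∫ α in c..d, ∫ θ in a..b, ((‖V α θ‖ ^ 2 : ℝ) : ℂ) * F θ) -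
      (∫ θ in a..b, F θ) *
        (∫ α in c..d, ∫ θ in a..b, ((‖V α θ‖ ^ 2 : ℝ) : ℂ) * conj (F θ)) =
    (((∫ α in c..d, ‖∫ θ in a..b, V α θ * F θ‖ ^ 2) +
      (∫ α in c..d, ‖∫ θ in a..b, V α θ * conj (F θ)‖ ^ 2) : ℝ) : ℂ) := by
  have hVa : ∀ α, Continuous (V α) := fun α => hV.uncurry_left α
  have hconjF : Continuous fun θ => conj (F θ) := RCLike.continuous_conj.comp hF
  -- inner expansion over θ₂
  have inner2 : ∀ α θ₁, (∫ θ₂ in a..b, ((‖V α θ₁ + V α θ₂‖ ^ 2 : ℝ) : ℂ) * F θ₁ * conj (F θ₂))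
      = F θ₁ * (((‖V α θ₁‖ ^ 2 : ℝ) : ℂ) * conj (∫ θ in a..b, F θ)
          + (∫ θ in a..b, ((‖V α θ‖ ^ 2 : ℝ) : ℂ) * conj (F θ))
          + V α θ₁ * conj (∫ θ in a..b, V α θ * F θ)
          + conj (V α θ₁) * (∫ θ in a..b, V α θ * conj (F θ))) := by
    intro α θ₁
    have e1 : ∀ θ₂, ((‖V α θ₁ + V α θ₂‖ ^ 2 : ℝ) : ℂ) * F θ₁ * conj (F θ₂)
        = (F θ₁ * ((‖V α θ₁‖ ^ 2 : ℝ) : ℂ)) * conj (F θ₂)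
          + F θ₁ * (((‖V α θ₂‖ ^ 2 : ℝ) : ℂ) * conj (F θ₂))
          + (F θ₁ * V α θ₁) * conj (V α θ₂ * F θ₂)
          + (F θ₁ * conj (V α θ₁)) * (V α θ₂ * conj (F θ₂)) := by
      intro θ₂
      simp only [ofReal_normSq_c, map_add, map_mul]
      ring
    simp only [e1]
    have i1 : IntervalIntegrable (fun θ₂ => (F θ₁ * ((‖V α θ₁‖ ^ 2 : ℝ) : ℂ)) * conj (F θ₂))
        volume a b := (continuous_const.mul hconjF).intervalIntegrable a b
    have i2 : IntervalIntegrable (fun θ₂ => F θ₁ * (((‖V α θ₂‖ ^ 2 : ℝ) : ℂ) * conj (F θ₂)))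
        volume a b := by
      apply Continuous.intervalIntegrable
      exact continuous_const.mul ((Complex.continuous_ofReal.comp
        ((hVa α).norm.pow 2)).mul hconjF)
    have i3 : IntervalIntegrable (fun θ₂ => (F θ₁ * V α θ₁) * conj (V α θ₂ * F θ₂))
        volume a b := by
      apply Continuous.intervalIntegrable
      exact continuous_const.mul (RCLike.continuous_conj.comp ((hVa α).mul hF))
    have i4 : IntervalIntegrable (fun θ₂ => (F θ₁ * conj (V α θ₁)) * (V α θ₂ * conj (F θ₂)))
        volume a b := by
      apply Continuous.intervalIntegrable
      exact continuous_const.mul ((hVa α).mul hconjF)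
    rw [integral_add ((i1.add i2).add i3) i4, integral_add (i1.add i2) i3, integral_add i1 i2,
      intervalIntegral.integral_const_mul, intervalIntegral.integral_const_mul,
      intervalIntegral.integral_const_mul, intervalIntegral.integral_const_mul,
      intervalIntegral_conj, intervalIntegral_conj]
    ring
  have inner1 : ∀ α, (∫ θ₁ in a..b, ∫ θ₂ in a..b,
        ((‖V α θ₁ + V α θ₂‖ ^ 2 : ℝ) : ℂ) * F θ₁ * conj (F θ₂))
      = conj (∫ θ in a..b, F θ) * (∫ θ in a..b, ((‖V α θ‖ ^ 2 : ℝ) : ℂ) * F θ)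
        + (∫ θ in a..b, F θ) * (∫ θ in a..b, ((‖V α θ‖ ^ 2 : ℝ) : ℂ) * conj (F θ))
        + ((‖∫ θ in a..b, V α θ * F θ‖ ^ 2 : ℝ) : ℂ)
        + ((‖∫ θ in a..b, V α θ * conj (F θ)‖ ^ 2 : ℝ) : ℂ) := by
    intro α
    simp only [inner2 α]
    have e2 : ∀ θ₁, F θ₁ * (((‖V α θ₁‖ ^ 2 : ℝ) : ℂ) * conj (∫ θ in a..b, F θ)
          + (∫ θ in a..b, ((‖V α θ‖ ^ 2 : ℝ) : ℂ) * conj (F θ))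
          + V α θ₁ * conj (∫ θ in a..b, V α θ * F θ)
          + conj (V α θ₁) * (∫ θ in a..b, V α θ * conj (F θ)))
        = conj (∫ θ in a..b, F θ) * (((‖V α θ₁‖ ^ 2 : ℝ) : ℂ) * F θ₁)
          + (∫ θ in a..b, ((‖V α θ‖ ^ 2 : ℝ) : ℂ) * conj (F θ)) * F θ₁
          + conj (∫ θ in a..b, V α θ * F θ) * (V α θ₁ * F θ₁)
          + (∫ θ in a..b, V α θ * conj (F θ)) * conj (V α θ₁ * conj (F θ₁)) := by
      intro θ₁
      simp only [map_mul, Complex.conj_conj]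
      ring
    simp only [e2]
    have j1 : IntervalIntegrable
        (fun θ₁ => conj (∫ θ in a..b, F θ) * (((‖V α θ₁‖ ^ 2 : ℝ) : ℂ) * F θ₁)) volume a b := by
      apply Continuous.intervalIntegrable
      exact continuous_const.mul ((Complex.continuous_ofReal.comp ((hVa α).norm.pow 2)).mul hF)
    have j2 : IntervalIntegrable
        (fun θ₁ => (∫ θ in a..b, ((‖V α θ‖ ^ 2 : ℝ) : ℂ) * conj (F θ)) * F θ₁) volume a b :=
      (continuous_const.mul hF).intervalIntegrable a b
    have j3 : IntervalIntegrable
        (fun θ₁ => conj (∫ θ in a..b, V α θ * F θ) * (V α θ₁ * F θ₁)) volume a b := by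
      apply Continuous.intervalIntegrable
      exact continuous_const.mul ((hVa α).mul hF)
    have j4 : IntervalIntegrable
        (fun θ₁ => (∫ θ in a..b, V α θ * conj (F θ)) * conj (V α θ₁ * conj (F θ₁)))
        volume a b := by
      apply Continuous.intervalIntegrable
      exact continuous_const.mul (RCLike.continuous_conj.comp ((hVa α).mul hconjF))
    rw [integral_add ((j1.add j2).add j3) j4, integral_add (j1.add j2) j3, integral_add j1 j2,
      intervalIntegral.integral_const_mul, intervalIntegral.integral_const_mul,
      intervalIntegral.integral_const_mul, intervalIntegral.integral_const_mul,
      intervalIntegral_conj]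
    rw [ofReal_normSq_c, ofReal_normSq_c]
    ring
  simp only [inner1]
  have cA : Continuous fun α => ∫ θ in a..b, ((‖V α θ‖ ^ 2 : ℝ) : ℂ) * F θ := by
    apply continuous_parametric_intervalIntegral_of_continuous'
    show Continuous fun p : ℝ × ℝ => ((‖V p.1 p.2‖ ^ 2 : ℝ) : ℂ) * F p.2
    exact (Complex.continuous_ofReal.comp (hV.norm.pow 2)).mul (hF.comp continuous_snd)
  have cB : Continuous fun α => ∫ θ in a..b, ((‖V α θ‖ ^ 2 : ℝ) : ℂ) * conj (F θ) := by
    apply continuous_parametric_intervalIntegral_of_continuous'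
    show Continuous fun p : ℝ × ℝ => ((‖V p.1 p.2‖ ^ 2 : ℝ) : ℂ) * conj (F p.2)
    exact (Complex.continuous_ofReal.comp (hV.norm.pow 2)).mul (hconjF.comp continuous_snd)
  have cv : Continuous fun α => ∫ θ in a..b, V α θ * F θ := by
    apply continuous_parametric_intervalIntegral_of_continuous'
    show Continuous fun p : ℝ × ℝ => V p.1 p.2 * F p.2
    exact hV.mul (hF.comp continuous_snd)
  have cw : Continuous fun α => ∫ θ in a..b, V α θ * conj (F θ) := by
    apply continuous_parametric_intervalIntegral_of_continuous'
    show Continuous fun p : ℝ × ℝ => V p.1 p.2 * conj (F p.2)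
    exact hV.mul (hconjF.comp continuous_snd)
  have k1 : IntervalIntegrable (fun α => conj (∫ θ in a..b, F θ) *
      (∫ θ in a..b, ((‖V α θ‖ ^ 2 : ℝ) : ℂ) * F θ)) volume c d :=
    (continuous_const.mul cA).intervalIntegrable c d
  have k2 : IntervalIntegrable (fun α => (∫ θ in a..b, F θ) *
      (∫ θ in a..b, ((‖V α θ‖ ^ 2 : ℝ) : ℂ) * conj (F θ))) volume c d :=
    (continuous_const.mul cB).intervalIntegrable c d
  have k3 : IntervalIntegrable (fun α => ((‖∫ θ in a..b, V α θ * F θ‖ ^ 2 : ℝ) : ℂ))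
      volume c d :=
    (Complex.continuous_ofReal.comp (cv.norm.pow 2)).intervalIntegrable c d
  have k4 : IntervalIntegrable (fun α => ((‖∫ θ in a..b, V α θ * conj (F θ)‖ ^ 2 : ℝ) : ℂ))
      volume c d :=
    (Complex.continuous_ofReal.comp (cw.norm.pow 2)).intervalIntegrable c d
  rw [integral_add ((k1.add k2).add k3) k4, integral_add (k1.add k2) k3, integral_add k1 k2,
    intervalIntegral.integral_const_mul, intervalIntegral.integral_const_mul, integral_ofReal, integral_ofReal,
    intervalIntegral_conj, Complex.ofReal_add]
  ring

/-- Theorem 2.2 of the paper (decomposition `I = I₁ + I₂` of the phaseless imaging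
functional): for continuous phaseless data `|U(α,θ₁) + U(α,θ₂)|²`, the imaging
functional `I(z)` equals `∫ |v(α)|² dα + ∫ |w(α)|² dα`, where `v` and `w` are the
indicated superposed far-field patterns; in particular `I(z)` is a nonnegative real
number. -/
theorem imaging_functional_decomposition
    (kp km : ℝ) (hkp : 0 < kp) (hkm : 0 < km) (hne : kp ≠ km)
    (U : ℝ → ℝ → ℂ)
    (hU : ContinuousOn (fun p : ℝ × ℝ => U p.1 p.2)
      (Set.Icc (thetac kp km) (Real.pi - thetac kp km) ×ˢ
        Set.Icc (Real.pi + thetac kp km) (2 * Real.pi - thetac kp km)))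
    (z : ℝ × ℝ) :
    (∫ α in (thetac kp km)..(Real.pi - thetac kp km),
        ∫ θ₁ in (Real.pi + thetac kp km)..(2 * Real.pi - thetac kp km),
          ∫ θ₂ in (Real.pi + thetac kp km)..(2 * Real.pi - thetac kp km),
            ((‖U α θ₁ + U α θ₂‖ ^ 2 : ℝ) : ℂ) *
              (Tcoef kp km θ₁ : ℂ) * Complex.exp (-(Complex.I * km * ph kp km z θ₁)) *
              (Tcoef kp km θ₂ : ℂ) * Complex.exp (Complex.I * km * ph kp km z θ₂)) -
      (∫ θ in (Real.pi + thetac kp km)..(2 * Real.pi - thetac kp km),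
          (Tcoef kp km θ : ℂ) * Complex.exp (Complex.I * km * ph kp km z θ)) *
        (∫ α in (thetac kp km)..(Real.pi - thetac kp km),
          ∫ θ in (Real.pi + thetac kp km)..(2 * Real.pi - thetac kp km),
            ((‖U α θ‖ ^ 2 : ℝ) : ℂ) *
              (Tcoef kp km θ : ℂ) * Complex.exp (-(Complex.I * km * ph kp km z θ))) -
      (∫ θ in (Real.pi + thetac kp km)..(2 * Real.pi - thetac kp km),
          (Tcoef kp km θ : ℂ) * Complex.exp (-(Complex.I * km * ph kp km z θ))) *
        (∫ α in (thetac kp km)..(Real.pi - thetac kp km),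
          ∫ θ in (Real.pi + thetac kp km)..(2 * Real.pi - thetac kp km),
            ((‖U α θ‖ ^ 2 : ℝ) : ℂ) *
              (Tcoef kp km θ : ℂ) * Complex.exp (Complex.I * km * ph kp km z θ)) =
    (((∫ α in (thetac kp km)..(Real.pi - thetac kp km),
        ‖∫ θ in (Real.pi + thetac kp km)..(2 * Real.pi - thetac kp km),
            U α θ * (Tcoef kp km θ : ℂ) *
              Complex.exp (-(Complex.I * km * ph kp km z θ))‖ ^ 2) +
      (∫ α in (thetac kp km)..(Real.pi - thetac kp km),
        ‖∫ θ in (Real.pi + thetac kp km)..(2 * Real.pi - thetac kp km),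
            U α θ * (Tcoef kp km θ : ℂ) *
              Complex.exp (Complex.I * km * ph kp km z θ)‖ ^ 2) : ℝ) : ℂ) := by
  open ComplexConjugate in
  set cc := thetac kp km with hcc
  have hc0 : 0 ≤ cc := by
    rw [hcc, thetac]; split
    · exact Real.arccos_nonneg _
    · exact le_refl 0
  have hc2 : cc ≤ Real.pi / 2 := by
    rw [hcc, thetac]; split
    · exact le_of_lt (Real.arccos_lt_pi_div_two.2 (div_pos hkm hkp))
    · linarith [Real.pi_pos]
  have hcd : cc ≤ Real.pi - cc := by linarith [Real.pi_pos]
  have hab : Real.pi + cc ≤ 2 * Real.pi - cc := by linarith [Real.pi_pos]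
  have hD : ∀ θ ∈ Set.Icc (Real.pi + cc) (2 * Real.pi - cc),
      kp * Real.sin θ + km * Real.sin (thetat kp km θ) ≠ 0 := by
    intro θ hθ
    obtain ⟨hθ1, hθ2⟩ := hθ
    have hsin : Real.sin θ ≤ 0 := by
      have h1 : 0 ≤ Real.sin (θ - Real.pi) :=
        Real.sin_nonneg_of_nonneg_of_le_pi (by linarith) (by linarith)
      rw [Real.sin_sub_pi] at h1; linarith
    have hst : Real.sin (thetat kp km θ) ≤ 0 := by
      rw [thetat, Real.sin_two_pi_sub, Real.sin_arccos]
      have := Real.sqrt_nonneg (1 - (kp / km * Real.cos θ) ^ 2)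
      linarith
    rcases lt_or_gt_of_ne hne with hlt | hgt
    · -- kp < km
      have hu : (kp / km * Real.cos θ) ^ 2 < 1 := by
        have h2 : kp / km < 1 := (div_lt_one hkm).2 hlt
        have h3 : 0 < kp / km := div_pos hkp hkm
        have h4 : (kp / km) ^ 2 < 1 := by nlinarith
        have h5 : Real.cos θ ^ 2 ≤ 1 := Real.cos_sq_le_one θ
        nlinarith [mul_nonneg (sq_nonneg (kp / km)) (sub_nonneg.2 h5)]
      have hst' : Real.sin (thetat kp km θ) < 0 := by
        rw [thetat, Real.sin_two_pi_sub, Real.sin_arccos]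
        have := Real.sqrt_pos.2 (by nlinarith : (0:ℝ) < 1 - (kp / km * Real.cos θ) ^ 2)
        linarith
      have e1 : kp * Real.sin θ ≤ 0 := mul_nonpos_of_nonneg_of_nonpos hkp.le hsin
      have e2 : km * Real.sin (thetat kp km θ) < 0 := mul_neg_of_pos_of_neg hkm hst'
      exact ne_of_lt (by linarith)
    · -- km < kp
      have hccpos : 0 < cc := by
        rw [hcc, thetac, if_pos hgt]
        exact Real.arccos_pos.2 ((div_lt_one hkp).2 hgt)
      have hsθ : Real.sin θ < 0 := by
        have : 0 < Real.sin (θ - Real.pi) :=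
          Real.sin_pos_of_pos_of_lt_pi (by linarith) (by linarith)
        rw [Real.sin_sub_pi] at this; linarith
      have e1 : kp * Real.sin θ < 0 := mul_neg_of_pos_of_neg hkp hsθ
      have e2 : km * Real.sin (thetat kp km θ) ≤ 0 :=
        mul_nonpos_of_nonneg_of_nonpos hkm.le hst
      exact ne_of_lt (by linarith)
  have hthetat : Continuous fun θ => thetat kp km θ := by
    unfold thetat
    exact continuous_const.sub
      (Real.continuous_arccos.comp (continuous_const.mul Real.continuous_cos))
  have hph : Continuous fun θ => ph kp km z θ := by
    unfold ph
    exact (continuous_const.mul (Real.continuous_cos.comp hthetat)).add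
      (continuous_const.mul (Real.continuous_sin.comp hthetat))
  have hT : ContinuousOn (fun θ => Tcoef kp km θ)
      (Set.Icc (Real.pi + cc) (2 * Real.pi - cc)) := by
    unfold Tcoef
    exact ContinuousOn.div
      ((continuous_const.mul Real.continuous_sin).continuousOn)
      (((continuous_const.mul Real.continuous_sin).add
        (continuous_const.mul (Real.continuous_sin.comp hthetat))).continuousOn)
      hD
  have hFc : ContinuousOn
      (fun θ => (Tcoef kp km θ : ℂ) * Complex.exp (-(Complex.I * km * ph kp km z θ)))
      (Set.Icc (Real.pi + cc) (2 * Real.pi - cc)) := by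
    apply ContinuousOn.mul (Complex.continuous_ofReal.comp_continuousOn hT)
    apply Continuous.continuousOn
    exact Complex.continuous_exp.comp
      ((continuous_const.mul (Complex.continuous_ofReal.comp hph)).neg)
  set Fe : ℝ → ℂ := Set.IccExtend hab
    ((Set.Icc (Real.pi + cc) (2 * Real.pi - cc)).restrict
      (fun θ => (Tcoef kp km θ : ℂ) * Complex.exp (-(Complex.I * km * ph kp km z θ))))
    with hFe
  have hFec : Continuous Fe := Continuous.Icc_extend' hFc.restrict
  have hFeq : ∀ θ ∈ Set.Icc (Real.pi + cc) (2 * Real.pi - cc),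
      Fe θ = (Tcoef kp km θ : ℂ) * Complex.exp (-(Complex.I * km * ph kp km z θ)) := by
    intro θ hθ
    rw [hFe, Set.IccExtend_of_mem hab _ hθ]
    rfl
  have hconjFe : ∀ θ ∈ Set.Icc (Real.pi + cc) (2 * Real.pi - cc),
      conj (Fe θ) = (Tcoef kp km θ : ℂ) * Complex.exp (Complex.I * km * ph kp km z θ) := by
    intro θ hθ
    rw [hFeq θ hθ, map_mul, Complex.conj_ofReal, ← Complex.exp_conj]
    congr 2
    simp [map_mul, Complex.conj_I, Complex.conj_ofReal]
  set Ue : ℝ → ℝ → ℂ := fun α θ =>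
    U (Set.projIcc cc (Real.pi - cc) hcd α : ℝ)
      (Set.projIcc (Real.pi + cc) (2 * Real.pi - cc) hab θ : ℝ) with hUedef
  have hUec : Continuous (Function.uncurry Ue) := by
    have hmap : Continuous fun p : ℝ × ℝ =>
        (((Set.projIcc cc (Real.pi - cc) hcd p.1 : ℝ),
          (Set.projIcc (Real.pi + cc) (2 * Real.pi - cc) hab p.2 : ℝ)) : ℝ × ℝ) :=
      ((continuous_subtype_val.comp continuous_projIcc).comp continuous_fst).prodMk
        ((continuous_subtype_val.comp continuous_projIcc).comp continuous_snd)
    exact hU.comp_continuous hmap (fun p =>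
      ⟨(Set.projIcc cc (Real.pi - cc) hcd p.1).2,
       (Set.projIcc (Real.pi + cc) (2 * Real.pi - cc) hab p.2).2⟩)
  have hUeq : ∀ α ∈ Set.Icc cc (Real.pi - cc),
      ∀ θ ∈ Set.Icc (Real.pi + cc) (2 * Real.pi - cc), Ue α θ = U α θ := by
    intro α hα θ hθ
    rw [hUedef]
    simp only [Set.projIcc_of_mem hcd hα, Set.projIcc_of_mem hab hθ]
  have e1 : (∫ α in cc..(Real.pi - cc),
        ∫ θ₁ in (Real.pi + cc)..(2 * Real.pi - cc),
          ∫ θ₂ in (Real.pi + cc)..(2 * Real.pi - cc),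
            ((‖U α θ₁ + U α θ₂‖ ^ 2 : ℝ) : ℂ) *
              (Tcoef kp km θ₁ : ℂ) * Complex.exp (-(Complex.I * km * ph kp km z θ₁)) *
              (Tcoef kp km θ₂ : ℂ) * Complex.exp (Complex.I * km * ph kp km z θ₂))
      = ∫ α in cc..(Real.pi - cc),
        ∫ θ₁ in (Real.pi + cc)..(2 * Real.pi - cc),
          ∫ θ₂ in (Real.pi + cc)..(2 * Real.pi - cc),
            ((‖Ue α θ₁ + Ue α θ₂‖ ^ 2 : ℝ) : ℂ) * Fe θ₁ * conj (Fe θ₂) := by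
    apply intervalIntegral.integral_congr
    intro α hα; rw [Set.uIcc_of_le hcd] at hα
    apply intervalIntegral.integral_congr
    intro θ₁ hθ₁; rw [Set.uIcc_of_le hab] at hθ₁
    apply intervalIntegral.integral_congr
    intro θ₂ hθ₂; rw [Set.uIcc_of_le hab] at hθ₂
    simp only [hUeq α hα θ₁ hθ₁, hUeq α hα θ₂ hθ₂, hFeq θ₁ hθ₁, hconjFe θ₂ hθ₂]
    ring
  have e2 : (∫ θ in (Real.pi + cc)..(2 * Real.pi - cc),
        (Tcoef kp km θ : ℂ) * Complex.exp (Complex.I * km * ph kp km z θ))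
      = ∫ θ in (Real.pi + cc)..(2 * Real.pi - cc), conj (Fe θ) := by
    apply intervalIntegral.integral_congr
    intro θ hθ; rw [Set.uIcc_of_le hab] at hθ
    simp only [hconjFe θ hθ]
  have e3 : (∫ θ in (Real.pi + cc)..(2 * Real.pi - cc),
        (Tcoef kp km θ : ℂ) * Complex.exp (-(Complex.I * km * ph kp km z θ)))
      = ∫ θ in (Real.pi + cc)..(2 * Real.pi - cc), Fe θ := by
    apply intervalIntegral.integral_congr
    intro θ hθ; rw [Set.uIcc_of_le hab] at hθ
    simp only [hFeq θ hθ]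
  have e4 : (∫ α in cc..(Real.pi - cc),
        ∫ θ in (Real.pi + cc)..(2 * Real.pi - cc),
          ((‖U α θ‖ ^ 2 : ℝ) : ℂ) *
            (Tcoef kp km θ : ℂ) * Complex.exp (-(Complex.I * km * ph kp km z θ)))
      = ∫ α in cc..(Real.pi - cc),
        ∫ θ in (Real.pi + cc)..(2 * Real.pi - cc), ((‖Ue α θ‖ ^ 2 : ℝ) : ℂ) * Fe θ := by
    apply intervalIntegral.integral_congr
    intro α hα; rw [Set.uIcc_of_le hcd] at hα
    apply intervalIntegral.integral_congr
    intro θ hθ; rw [Set.uIcc_of_le hab] at hθ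
    simp only [hUeq α hα θ hθ, hFeq θ hθ]
    ring
  have e5 : (∫ α in cc..(Real.pi - cc),
        ∫ θ in (Real.pi + cc)..(2 * Real.pi - cc),
          ((‖U α θ‖ ^ 2 : ℝ) : ℂ) *
            (Tcoef kp km θ : ℂ) * Complex.exp (Complex.I * km * ph kp km z θ))
      = ∫ α in cc..(Real.pi - cc),
        ∫ θ in (Real.pi + cc)..(2 * Real.pi - cc),
          ((‖Ue α θ‖ ^ 2 : ℝ) : ℂ) * conj (Fe θ) := by
    apply intervalIntegral.integral_congr
    intro α hα; rw [Set.uIcc_of_le hcd] at hα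
    apply intervalIntegral.integral_congr
    intro θ hθ; rw [Set.uIcc_of_le hab] at hθ
    simp only [hUeq α hα θ hθ, hconjFe θ hθ]
    ring
  have e6 : (∫ α in cc..(Real.pi - cc),
        ‖∫ θ in (Real.pi + cc)..(2 * Real.pi - cc),
            U α θ * (Tcoef kp km θ : ℂ) *
              Complex.exp (-(Complex.I * km * ph kp km z θ))‖ ^ 2)
      = ∫ α in cc..(Real.pi - cc),
        ‖∫ θ in (Real.pi + cc)..(2 * Real.pi - cc), Ue α θ * Fe θ‖ ^ 2 := by
    apply intervalIntegral.integral_congr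
    intro α hα; rw [Set.uIcc_of_le hcd] at hα
    have h : (∫ θ in (Real.pi + cc)..(2 * Real.pi - cc),
          U α θ * (Tcoef kp km θ : ℂ) * Complex.exp (-(Complex.I * km * ph kp km z θ)))
        = ∫ θ in (Real.pi + cc)..(2 * Real.pi - cc), Ue α θ * Fe θ := by
      apply intervalIntegral.integral_congr
      intro θ hθ; rw [Set.uIcc_of_le hab] at hθ
      simp only [hUeq α hα θ hθ, hFeq θ hθ]
      ring
    simp only [h]
  have e7 : (∫ α in cc..(Real.pi - cc),
        ‖∫ θ in (Real.pi + cc)..(2 * Real.pi - cc),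
            U α θ * (Tcoef kp km θ : ℂ) *
              Complex.exp (Complex.I * km * ph kp km z θ)‖ ^ 2)
      = ∫ α in cc..(Real.pi - cc),
        ‖∫ θ in (Real.pi + cc)..(2 * Real.pi - cc), Ue α θ * conj (Fe θ)‖ ^ 2 := by
    apply intervalIntegral.integral_congr
    intro α hα; rw [Set.uIcc_of_le hcd] at hα
    have h : (∫ θ in (Real.pi + cc)..(2 * Real.pi - cc),
          U α θ * (Tcoef kp km θ : ℂ) * Complex.exp (Complex.I * km * ph kp km z θ))
        = ∫ θ in (Real.pi + cc)..(2 * Real.pi - cc), Ue α θ * conj (Fe θ) := by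
      apply intervalIntegral.integral_congr
      intro θ hθ; rw [Set.uIcc_of_le hab] at hθ
      simp only [hUeq α hα θ hθ, hconjFe θ hθ]
      ring
    simp only [h]
  rw [e1, e2, e3, e4, e5, e6, e7]
  exact key cc (Real.pi - cc) (Real.pi + cc) (2 * Real.pi - cc) Ue Fe hUec hFec
end
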